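/- Let ρ be a weakly outer-continuous size function on a topological space E. Then for every compact subset K of E, ρ°(K) = sup_{x ∈ K} ρ({x}) and ρ°(K) < ∞. -/

import Mathlib

open scoped ENNReal

/-- A bornology on `E`, as a collection of "bounded" sets. -/
def IsBornology {E : Type*} (B : Set (Set E)) : Prop :=
  (∀ x : E, ∃ b ∈ B, x ∈ b) ∧
  (∀ b ∈ B, ∀ b' ∈ B, b ∪ b' ∈ B) ∧
  (∀ b b' : Set E, b ⊆ b' → b' ∈ B → b ∈ B)

/-- `ρ` is a size function. -/
def IsSizeFunction {E : Type*} (ρ : Set E → ℝ≥0∞) : Prop :=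
  ρ ∅ = 0 ∧ (∀ x : E, ρ {x} < ⊤) ∧ (∀ A A' : Set E, A ⊆ A' → ρ A ≤ ρ A')

/-- The monk of a size function. -/
noncomputable def monk {E : Type*} (ρ : Set E → ℝ≥0∞) (A : Set E) : ℝ≥0∞ :=
  sInf {t : ℝ≥0∞ | 0 < t ∧ ∃ S : Finset (Set E), (A ⊆ ⋃ s ∈ S, s) ∧ ∀ s ∈ S, ρ s ≤ t}

/-- The outer regularization `ρ⁺`. -/
noncomputable def sizePlus {E : Type*} [TopologicalSpace E] (ρ : Set E → ℝ≥0∞) (A : Set E) : ℝ≥0∞ :=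
  ⨅ (G : Set E) (_ : IsOpen G) (_ : A ⊆ G), ρ G

theorem stmt15 {E : Type*} [TopologicalSpace E] (ρ : Set E → ℝ≥0∞)
    (hρ : IsSizeFunction ρ)
    (hoc : ∀ K : Set E, IsCompact K → sizePlus ρ K = ρ K) :
    ∀ K : Set E, IsCompact K →
      monk ρ K = (⨆ x ∈ K, ρ {x}) ∧ monk ρ K < ⊤ := by
  classical
  obtain ⟨h0, hfin, hmono⟩ := hρ
  intro K hK
  -- from weak outer continuity on singletons, extract open neighborhoods with controlled size
  have hx_open : ∀ (x : E) (b : ℝ≥0∞), ρ {x} < b → ∃ G, IsOpen G ∧ x ∈ G ∧ ρ G < b := by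
    intro x b hb
    have h := hoc {x} isCompact_singleton
    rw [← h] at hb
    simp only [sizePlus, iInf_lt_iff] at hb
    obtain ⟨G, hGo, hGs, hGb⟩ := hb
    exact ⟨G, hGo, Set.singleton_subset_iff.1 hGs, hGb⟩
  -- compactness: from pointwise open bounds, get a finite cover
  have cover : ∀ b : ℝ≥0∞, (∀ x : E, x ∈ K → ρ {x} < b) →
      ∃ S : Finset (Set E), (K ⊆ ⋃ s ∈ S, s) ∧ ∀ s ∈ S, ρ s < b := by
    intro b hb
    have : ∀ x : K, ∃ G, IsOpen G ∧ (x : E) ∈ G ∧ ρ G < b := fun x =>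
      hx_open x _ (hb x x.2)
    choose G hGo hGx hGb using this
    obtain ⟨F, hF⟩ := hK.elim_finite_subcover G hGo
      (fun x hxK => Set.mem_iUnion.2 ⟨⟨x, hxK⟩, hGx _⟩)
    refine ⟨F.image G, ?_, ?_⟩
    · intro x hxK
      obtain ⟨i, hiF, hxi⟩ := Set.mem_iUnion₂.1 (hF hxK)
      exact Set.mem_iUnion₂.2 ⟨G i, Finset.mem_image_of_mem G hiF, hxi⟩
    · intro s hs
      obtain ⟨i, _, rfl⟩ := Finset.mem_image.1 hs
      exact hGb i
  -- monk ≤ t whenever we have a suitable finite cover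
  have monk_le : ∀ t : ℝ≥0∞, 0 < t →
      (∃ S : Finset (Set E), (K ⊆ ⋃ s ∈ S, s) ∧ ∀ s ∈ S, ρ s ≤ t) → monk ρ K ≤ t := by
    rintro t ht ⟨S, hcov, hbd⟩
    exact sInf_le ⟨ht, S, hcov, hbd⟩
  -- lower bound: sup of singleton sizes ≤ monk
  have hM_le : (⨆ x ∈ K, ρ {x}) ≤ monk ρ K := by
    refine le_sInf ?_
    rintro t ⟨ht, S, hcov, hbd⟩
    refine iSup₂_le fun x hx => ?_
    obtain ⟨s, hsS, hxs⟩ := Set.mem_iUnion₂.1 (hcov hx)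
    exact (hmono {x} s (Set.singleton_subset_iff.2 hxs)).trans (hbd s hsS)
  -- finiteness of monk
  have hmonk_fin : monk ρ K < ⊤ := by
    obtain ⟨S, hcov, hbd⟩ := cover ⊤ (fun x _ => hfin x)
    have hsup : S.sup ρ < ⊤ := by
      refine Finset.sup_lt_iff (by simp) |>.2 fun s hs => hbd s hs
    have : monk ρ K ≤ S.sup ρ + 1 := by
      refine monk_le _ (lt_of_lt_of_le zero_lt_one le_add_self) ⟨S, hcov, fun s hs => ?_⟩
      exact (Finset.le_sup hs).trans le_self_add
    exact this.trans_lt (by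
      rw [ENNReal.add_lt_top]
      exact ⟨hsup, ENNReal.one_lt_top⟩)
  have hM_fin : (⨆ x ∈ K, ρ {x}) < ⊤ := hM_le.trans_lt hmonk_fin
  -- upper bound
  have hle : monk ρ K ≤ ⨆ x ∈ K, ρ {x} := by
    refine le_of_forall_gt_imp_ge_of_dense fun t htM => ?_
    have ht : 0 < t := lt_of_le_of_lt zero_le htM
    obtain ⟨S, hcov, hbd⟩ := cover t (fun x hx =>
      lt_of_le_of_lt (le_iSup₂ (f := fun x (_ : x ∈ K) => ρ {x}) x hx) htM)
    exact monk_le t ht ⟨S, hcov, fun s hs => (hbd s hs).le⟩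
  exact ⟨le_antisymm hle hM_le, hmonk_fin⟩
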